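/- arXiv:2006.07832 — 4 statements merged into one kernel-verified Lean document; each statement's English description precedes it below -/
import Mathlib

section
/- Let ε > 0, N ≥ 1, v_max > 0, and let I be a finite index set with value function val : I → ℝ satisfying 0 ≤ val(i) ≤ v_max for all i. Define val'(i) = ⌊val(i)·N/(ε·v_max)⌋. Let S, O ⊆ I be finite sets with |O| ≤ N such that Σ_{i∈O} val'(i) ≤ Σ_{i∈S} val'(i). Then Σ_{i∈O} val(i) ≤ Σ_{i∈S} val(i) + ε·v_max. -/
theorem rounded_sum_approx {α : Type*} [DecidableEq α]
    (ε : ℝ) (hε : 0 < ε) (N : ℕ) (hN : 1 ≤ N) (vmax : ℝ) (hvmax : 0 < vmax)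
    (I : Finset α) (val : α → ℝ)
    (hval : ∀ i ∈ I, 0 ≤ val i ∧ val i ≤ vmax)
    (S O : Finset α) (hS : S ⊆ I) (hO : O ⊆ I) (hOcard : O.card ≤ N)
    (hsum : (∑ i ∈ O, ⌊val i * N / (ε * vmax)⌋) ≤ ∑ i ∈ S, ⌊val i * N / (ε * vmax)⌋) :
    (∑ i ∈ O, val i) ≤ (∑ i ∈ S, val i) + ε * vmax := by
  set c : ℝ := ε * vmax / N with hc
  have hNpos : (0:ℝ) < N := by exact_mod_cast Nat.lt_of_lt_of_le Nat.zero_lt_one hN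
  have hcpos : 0 < c := div_pos (mul_pos hε hvmax) hNpos
  have key1 : ∀ i ∈ O, val i ≤ c * (⌊val i * N / (ε * vmax)⌋ + 1) := by
    intro i hi
    have h := Int.lt_floor_add_one (val i * N / (ε * vmax))
    have := (div_lt_iff₀ (mul_pos hε hvmax)).mp h
    calc val i = val i * N / N := by field_simp
      _ ≤ (↑⌊val i * N / (ε * vmax)⌋ + 1) * (ε * vmax) / N := by
          apply div_le_div_of_nonneg_right (le_of_lt this) hNpos.le
      _ = c * (⌊val i * N / (ε * vmax)⌋ + 1) := by rw [hc]; ring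
  have key2 : ∀ i ∈ S, c * ⌊val i * N / (ε * vmax)⌋ ≤ val i := by
    intro i hi
    have h := Int.floor_le (val i * N / (ε * vmax))
    have := (le_div_iff₀ (mul_pos hε hvmax)).mp h
    calc c * ⌊val i * N / (ε * vmax)⌋ = (⌊val i * N / (ε * vmax)⌋ * (ε * vmax)) / N := by
          rw [hc]; ring
      _ ≤ val i * N / N := div_le_div_of_nonneg_right this hNpos.le
      _ = val i := by field_simp
  have hsum' : (↑(∑ i ∈ O, ⌊val i * N / (ε * vmax)⌋) : ℝ) ≤
      ↑(∑ i ∈ S, ⌊val i * N / (ε * vmax)⌋) := by exact_mod_cast hsum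
  calc (∑ i ∈ O, val i) ≤ ∑ i ∈ O, c * (⌊val i * N / (ε * vmax)⌋ + 1) :=
        Finset.sum_le_sum key1
    _ = c * (∑ i ∈ O, (⌊val i * N / (ε * vmax)⌋ : ℝ)) + c * O.card := by
        simp only [mul_add, mul_one, Finset.sum_add_distrib, Finset.sum_const,
          nsmul_eq_mul, Finset.mul_sum, mul_comm]
    _ ≤ c * (∑ i ∈ S, (⌊val i * N / (ε * vmax)⌋ : ℝ)) + c * N := by
        refine add_le_add (mul_le_mul_of_nonneg_left ?_ hcpos.le)
          (mul_le_mul_of_nonneg_left (by exact_mod_cast hOcard) hcpos.le)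
        push_cast at hsum' ⊢; exact hsum'
    _ ≤ (∑ i ∈ S, val i) + ε * vmax := by
        refine add_le_add ?_ ?_
        · rw [Finset.mul_sum]; exact Finset.sum_le_sum key2
        · rw [hc]; rw [div_mul_cancel₀]; exact hNpos.ne'
end

section
/- Let 0 < ε < 1, let n ≥ 1 be a natural number and v > 0 a real. Let S be a finite set with value function val : S → ℝ, val(i) ≥ 0 for all i, and set val''(i) = ⌊n·val(i)/(ε·v)⌋. If |S| ≤ n and n(1−2ε)/ε − 1 ≤ Σ_{i∈S} val''(i) ≤ n(1+2ε)/ε, then (1−3ε)·v ≤ Σ_{i∈S} val(i) ≤ (1+3ε)·v. -/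
theorem value_from_rounded_range {α : Type*} [DecidableEq α]
    (ε : ℝ) (hε : 0 < ε) (hε1 : ε < 1) (n : ℕ) (hn : 1 ≤ n) (v : ℝ) (hv : 0 < v)
    (S : Finset α) (val : α → ℝ) (hval : ∀ i ∈ S, 0 ≤ val i)
    (hcard : S.card ≤ n)
    (hlo : (n : ℝ) * (1 - 2 * ε) / ε - 1 ≤ (∑ i ∈ S, ⌊(n : ℝ) * val i / (ε * v)⌋ : ℤ))
    (hhi : ((∑ i ∈ S, ⌊(n : ℝ) * val i / (ε * v)⌋ : ℤ) : ℝ) ≤ (n : ℝ) * (1 + 2 * ε) / ε) :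
    (1 - 3 * ε) * v ≤ (∑ i ∈ S, val i) ∧ (∑ i ∈ S, val i) ≤ (1 + 3 * ε) * v := by
  have hεv : (0:ℝ) < ε * v := mul_pos hε hv
  have hn' : (1:ℝ) ≤ n := by exact_mod_cast hn
  have hn0 : (0:ℝ) < n := by linarith
  set F : ℤ := ∑ i ∈ S, ⌊(n : ℝ) * val i / (ε * v)⌋ with hF
  set Sv : ℝ := ∑ i ∈ S, val i with hSv
  have hsum : ∑ i ∈ S, (n : ℝ) * val i / (ε * v) = (n : ℝ) * Sv / (ε * v) := by
    rw [hSv, Finset.mul_sum, Finset.sum_div]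
  have h1 : (F : ℝ) ≤ (n : ℝ) * Sv / (ε * v) := by
    rw [← hsum, hF]
    push_cast
    exact Finset.sum_le_sum fun i _ => Int.floor_le _
  have h2 : (n : ℝ) * Sv / (ε * v) ≤ (F : ℝ) + S.card := by
    rw [← hsum, hF]
    push_cast
    calc ∑ i ∈ S, (n : ℝ) * val i / (ε * v)
        ≤ ∑ i ∈ S, ((⌊(n : ℝ) * val i / (ε * v)⌋ : ℝ) + 1) :=
          Finset.sum_le_sum fun i _ => (Int.lt_floor_add_one _).le
      _ = (∑ i ∈ S, (⌊(n : ℝ) * val i / (ε * v)⌋ : ℝ)) + S.card := by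
          rw [Finset.sum_add_distrib, Finset.sum_const, nsmul_eq_mul, mul_one]
  have hcard' : (S.card : ℝ) ≤ n := by exact_mod_cast hcard
  have hlow : (n : ℝ) * (1 - 2 * ε) / ε - 1 ≤ (n : ℝ) * Sv / (ε * v) := le_trans hlo h1
  have hhigh : (n : ℝ) * Sv / (ε * v) ≤ (n : ℝ) * (1 + 2 * ε) / ε + n := by
    calc (n : ℝ) * Sv / (ε * v) ≤ (F : ℝ) + S.card := h2
      _ ≤ (n : ℝ) * (1 + 2 * ε) / ε + n := add_le_add hhi hcard'
  -- clear denominators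
  have hεne : ε ≠ 0 := ne_of_gt hε
  have hvne : v ≠ 0 := ne_of_gt hv
  constructor
  · have h : ((n : ℝ) * (1 - 2 * ε) / ε - 1) * (ε * v) ≤ (n : ℝ) * Sv :=
      (le_div_iff₀ hεv).mp hlow
    have hexp : ((n : ℝ) * (1 - 2 * ε) / ε - 1) * (ε * v) =
        (n : ℝ) * (1 - 2 * ε) * v - ε * v := by field_simp
    rw [hexp] at h
    -- n(1-3ε)v ≤ n(1-2ε)v - εv since εv ≤ nεv
    have key : (n : ℝ) * ((1 - 3 * ε) * v) ≤ (n : ℝ) * Sv := by nlinarith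
    exact le_of_mul_le_mul_left key hn0
  · have h : (n : ℝ) * Sv ≤ ((n : ℝ) * (1 + 2 * ε) / ε + n) * (ε * v) :=
      (div_le_iff₀ hεv).mp hhigh
    have hexp : ((n : ℝ) * (1 + 2 * ε) / ε + n) * (ε * v) =
        (n : ℝ) * (1 + 2 * ε) * v + n * ε * v := by field_simp
    rw [hexp] at h
    have key : (n : ℝ) * Sv ≤ (n : ℝ) * ((1 + 3 * ε) * v) := by nlinarith
    exact le_of_mul_le_mul_left key hn0
end

section
/- Let 0 < ε, let n ≥ 1 be a natural number and w > 0 a real. Let O be a finite set with weight function wt : O → ℝ, wt(i) ≥ 0, such that (1−ε)·w ≤ Σ_{i∈O} wt(i) ≤ (1+ε)·w and |O| ≤ n. Define wt''(i) = ⌈n·wt(i)/(ε·w)⌉. Then ⌈n(1−2ε)/ε⌉ ≤ Σ_{i∈O} wt''(i) ≤ ⌈n(1+2ε)/ε⌉. -/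
theorem rounded_weight_range {α : Type*} [DecidableEq α]
    (ε : ℝ) (hε : 0 < ε) (n : ℕ) (hn : 1 ≤ n) (w : ℝ) (hw : 0 < w)
    (O : Finset α) (wt : α → ℝ) (hwt : ∀ i ∈ O, 0 ≤ wt i)
    (hcard : O.card ≤ n)
    (hlo : (1 - ε) * w ≤ ∑ i ∈ O, wt i) (hhi : (∑ i ∈ O, wt i) ≤ (1 + ε) * w) :
    ⌈(n : ℝ) * (1 - 2 * ε) / ε⌉ ≤ (∑ i ∈ O, ⌈(n : ℝ) * wt i / (ε * w)⌉) ∧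
      (∑ i ∈ O, ⌈(n : ℝ) * wt i / (ε * w)⌉) ≤ ⌈(n : ℝ) * (1 + 2 * ε) / ε⌉ := by
  have hn1 : (1 : ℝ) ≤ (n : ℝ) := by exact_mod_cast hn
  have hεw : 0 < ε * w := mul_pos hε hw
  -- lower bound on real sum of ceilings
  have hsum_lo : (n : ℝ) * (∑ i ∈ O, wt i) / (ε * w) ≤
      ((∑ i ∈ O, ⌈(n : ℝ) * wt i / (ε * w)⌉ : ℤ) : ℝ) := by
    push_cast
    rw [Finset.mul_sum, Finset.sum_div]
    exact Finset.sum_le_sum fun i _ => Int.le_ceil _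
  have hsum_hi : ((∑ i ∈ O, ⌈(n : ℝ) * wt i / (ε * w)⌉ : ℤ) : ℝ) ≤
      (n : ℝ) * (∑ i ∈ O, wt i) / (ε * w) + O.card := by
    push_cast
    rw [Finset.mul_sum, Finset.sum_div]
    calc (∑ i ∈ O, (⌈(n : ℝ) * wt i / (ε * w)⌉ : ℝ))
        ≤ ∑ i ∈ O, ((n : ℝ) * wt i / (ε * w) + 1) :=
          Finset.sum_le_sum fun i _ => (Int.ceil_lt_add_one _).le
      _ = (∑ i ∈ O, (n : ℝ) * wt i / (ε * w)) + O.card := by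
          rw [Finset.sum_add_distrib]; simp
  constructor
  · rw [Int.ceil_le]
    refine le_trans ?_ hsum_lo
    rw [div_le_div_iff₀ hε hεw]
    nlinarith [mul_le_mul_of_nonneg_left hlo (mul_pos (show (0:ℝ) < n by linarith) hε).le,
      mul_nonneg (mul_nonneg (show (0:ℝ) ≤ n by linarith) (mul_pos hε hε).le) hw.le]
  · have : ((∑ i ∈ O, ⌈(n : ℝ) * wt i / (ε * w)⌉ : ℤ) : ℝ) ≤ (n : ℝ) * (1 + 2 * ε) / ε := by
      refine hsum_hi.trans ?_
      have hcard' : (O.card : ℝ) ≤ (n : ℝ) := by exact_mod_cast hcard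
      have h1 : (n : ℝ) * (∑ i ∈ O, wt i) / (ε * w) ≤ (n : ℝ) * ((1 + ε) * w) / (ε * w) := by
        gcongr
      have h2 : (n : ℝ) * ((1 + ε) * w) / (ε * w) = (n : ℝ) * (1 + ε) / ε := by
        field_simp
      rw [h2] at h1
      have : (n : ℝ) * (1 + ε) / ε + n = (n : ℝ) * (1 + 2 * ε) / ε := by
        field_simp; ring
      linarith
    calc (∑ i ∈ O, ⌈(n : ℝ) * wt i / (ε * w)⌉ : ℤ)
        = ⌈(((∑ i ∈ O, ⌈(n : ℝ) * wt i / (ε * w)⌉ : ℤ)) : ℝ)⌉ := (Int.ceil_intCast _).symm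
      _ ≤ ⌈(n : ℝ) * (1 + 2 * ε) / ε⌉ := Int.ceil_le_ceil this
end

section
/- Let 0 < ε < 1, n ≥ 1 a natural number, w > 0 a real. Let S be a finite set with nonnegative weights wt(i), set wt''(i) = ⌈n·wt(i)/(ε·w)⌉. If |S| ≤ n and n(1−2ε)/ε ≤ Σ_{i∈S} wt''(i) ≤ n(1+2ε)/ε + 1, then (1−3ε)·w ≤ Σ_{i∈S} wt(i) ≤ (1+3ε)·w. -/
theorem weight_from_rounded_range {α : Type*} [DecidableEq α]
    (ε : ℝ) (hε : 0 < ε) (hε1 : ε < 1) (n : ℕ) (hn : 1 ≤ n) (w : ℝ) (hw : 0 < w)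
    (S : Finset α) (wt : α → ℝ) (hwt : ∀ i ∈ S, 0 ≤ wt i)
    (hcard : S.card ≤ n)
    (hlo : (n : ℝ) * (1 - 2 * ε) / ε ≤ ((∑ i ∈ S, ⌈(n : ℝ) * wt i / (ε * w)⌉ : ℤ) : ℝ))
    (hhi : ((∑ i ∈ S, ⌈(n : ℝ) * wt i / (ε * w)⌉ : ℤ) : ℝ) ≤ (n : ℝ) * (1 + 2 * ε) / ε + 1) :
    (1 - 3 * ε) * w ≤ (∑ i ∈ S, wt i) ∧ (∑ i ∈ S, wt i) ≤ (1 + 3 * ε) * w := by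
  have hεw : 0 < ε * w := mul_pos hε hw
  have hn' : (1 : ℝ) ≤ (n : ℝ) := by exact_mod_cast hn
  set T := ∑ i ∈ S, wt i with hT
  have hA : (n : ℝ) * T / (ε * w) ≤ ((∑ i ∈ S, ⌈(n : ℝ) * wt i / (ε * w)⌉ : ℤ) : ℝ) := by
    push_cast
    rw [hT, Finset.mul_sum, Finset.sum_div]
    exact Finset.sum_le_sum fun i _ => Int.le_ceil _
  have hB : ((∑ i ∈ S, ⌈(n : ℝ) * wt i / (ε * w)⌉ : ℤ) : ℝ) ≤ (n : ℝ) * T / (ε * w) + n := by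
    push_cast
    have : ∑ i ∈ S, (⌈(n : ℝ) * wt i / (ε * w)⌉ : ℝ)
        ≤ ∑ i ∈ S, ((n : ℝ) * wt i / (ε * w) + 1) :=
      Finset.sum_le_sum fun i _ => (Int.ceil_lt_add_one _).le
    rw [Finset.sum_add_distrib, Finset.sum_const, nsmul_eq_mul, mul_one] at this
    refine this.trans ?_
    rw [hT, Finset.mul_sum, Finset.sum_div]
    have : (S.card : ℝ) ≤ (n : ℝ) := by exact_mod_cast hcard
    linarith
  have h1 := hA.trans hhi
  have h2 := hlo.trans hB
  rw [div_le_iff₀ hεw] at h1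
  have h2' : (n : ℝ) * (1 - 2 * ε) / ε - n ≤ (n : ℝ) * T / (ε * w) := by linarith
  rw [le_div_iff₀ hεw] at h2'
  have e1 : ((n : ℝ) * (1 + 2 * ε) / ε + 1) * (ε * w) = ((n : ℝ) * (1 + 2 * ε) + ε) * w := by
    field_simp
  have e2 : ((n : ℝ) * (1 - 2 * ε) / ε - n) * (ε * w) = ((n : ℝ) * (1 - 2 * ε) - n * ε) * w := by
    field_simp
  rw [e1] at h1
  rw [e2] at h2'
  have hnpos : (0 : ℝ) < n := by linarith
  constructor
  · have : (n : ℝ) * ((1 - 3 * ε) * w) ≤ (n : ℝ) * T := by nlinarith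
    exact le_of_mul_le_mul_left this hnpos
  · have : (n : ℝ) * T ≤ (n : ℝ) * ((1 + 3 * ε) * w) := by nlinarith [mul_pos hε hw]
    exact le_of_mul_le_mul_left this hnpos
end
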